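/- Assume M is ergodic with unique invariant distribution π_M and set c_* := min_{ℓ∈K} π_M^ℓ. Then there exist a real number V_∞ ≥ 0 and a constant C > 0 such that for every δ with 1 − c_*/2 < δ < 1 one has sup_{ξ ∈ Δ(K)} |V_δ(ξ) − V_∞| ≤ C·(1−δ)·log₂(1/(1−δ)). -/

import Mathlib

open scoped BigOperators

noncomputable section

/-- A row-stochastic matrix: nonnegative entries, rows summing to 1. -/
def IsStochastic {K : Type*} [Fintype K] (M : Matrix K K ℝ) : Prop :=
  (∀ i j, 0 ≤ M i j) ∧ ∀ i, ∑ j, M i j = 1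

/-- The total probability `χ(ξ)[i]` of action `i` under belief `ξ` and one-stage
strategy `χ`. -/
def actionProb {K I : Type*} [Fintype K] (ξ : K → ℝ) (χ : K → I → ℝ) (i : I) : ℝ :=
  ∑ ℓ, ξ ℓ * χ ℓ i

/-- The posterior belief `ξ(χ,i)` of Player 2 upon observing action `i`
(junk value when `χ(ξ)[i] = 0`, in which case its weight in the Bellman
equation vanishes). -/
def posterior {K I : Type*} [Fintype K] (ξ : K → ℝ) (χ : K → I → ℝ) (i : I) (ℓ : K) : ℝ :=
  ξ ℓ * χ ℓ i / actionProb ξ χ i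

/-- The one-stage payoff `r(ξ,χ)`: Player 2's best response payoff
`min_j Σ_ℓ ξ^ℓ Σ_i χ^ℓ[i] G^ℓ(i,j)`. -/
def onestagePayoff {K I J : Type*} [Fintype K] [Fintype I] [Fintype J] [Nonempty J]
    (G : K → I → J → ℝ) (ξ : K → ℝ) (χ : K → I → ℝ) : ℝ :=
  ⨅ j : J, ∑ ℓ, ξ ℓ * ∑ i, χ ℓ i * G ℓ i j

/-- `V` is the family of δ-discounted values of the Markov chain game:
for each `δ ∈ [0,1)`, `V δ` is bounded between `0` and `C = ‖G‖∞` on `Δ(K)` and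
satisfies the Bellman equation there. -/
def IsGameValueFamily {K I J : Type*} [Fintype K] [Fintype I] [Fintype J] [Nonempty J]
    (M : Matrix K K ℝ) (G : K → I → J → ℝ) (C : ℝ) (V : ℝ → (K → ℝ) → ℝ) : Prop :=
  ∀ δ ∈ Set.Ico (0 : ℝ) 1,
    (∀ ξ ∈ stdSimplex ℝ K, 0 ≤ V δ ξ ∧ V δ ξ ≤ C) ∧
    ∀ ξ ∈ stdSimplex ℝ K,
      V δ ξ = sSup { x : ℝ | ∃ χ : K → I → ℝ, (∀ ℓ, χ ℓ ∈ stdSimplex ℝ I) ∧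
        x = (1 - δ) * onestagePayoff G ξ χ +
            δ * ∑ i, actionProb ξ χ i * V δ (Matrix.vecMul (posterior ξ χ i) M) }


set_option linter.unusedSectionVars false
namespace MCG

variable {K I J : Type*} [Fintype K] [Fintype I] [Fintype J] [Nonempty J]

lemma mem_simplex_iff {α : Type*} [Fintype α] {ξ : α → ℝ} :
    ξ ∈ stdSimplex ℝ α ↔ (∀ ℓ, 0 ≤ ξ ℓ) ∧ ∑ ℓ, ξ ℓ = 1 := Iff.rfl

lemma vecMul_apply' (p : K → ℝ) (M : Matrix K K ℝ) (j : K) :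
    Matrix.vecMul p M j = ∑ i, p i * M i j := by
  simp [Matrix.vecMul, dotProduct]

lemma vecMul_mem {M : Matrix K K ℝ} (hM : IsStochastic M) {p : K → ℝ}
    (hp : p ∈ stdSimplex ℝ K) : Matrix.vecMul p M ∈ stdSimplex ℝ K := by
  rw [mem_simplex_iff] at hp ⊢
  constructor
  · intro j
    rw [vecMul_apply']
    exact Finset.sum_nonneg fun i _ => mul_nonneg (hp.1 i) (hM.1 i j)
  · simp only [vecMul_apply']
    rw [Finset.sum_comm]
    calc (∑ i, ∑ j, p i * M i j) = ∑ i, p i * ∑ j, M i j := by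
          simp [Finset.mul_sum]
      _ = 1 := by simp [hM.2, hp.2]

lemma stoch_pow {M : Matrix K K ℝ} [DecidableEq K] (hM : IsStochastic M) (n : ℕ) :
    IsStochastic (M ^ n) := by
  induction n with
  | zero =>
    constructor
    · intro i j; simp [Matrix.one_apply]; split <;> norm_num
    · intro i; simp [Matrix.one_apply]
  | succ n ih =>
    rw [pow_succ]
    constructor
    · intro i j
      rw [Matrix.mul_apply]
      exact Finset.sum_nonneg fun l _ => mul_nonneg (ih.1 i l) (hM.1 l j)
    · intro i
      simp only [Matrix.mul_apply]
      rw [Finset.sum_comm]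
      calc (∑ l, ∑ j, (M ^ n) i l * M l j) = ∑ l, (M ^ n) i l * ∑ j, M l j := by
            simp [Finset.mul_sum]
        _ = 1 := by simp [hM.2, ih.2]

lemma sum_actionProb {ξ : K → ℝ} {χ : K → I → ℝ} (hξ : ξ ∈ stdSimplex ℝ K)
    (hχ : ∀ ℓ, χ ℓ ∈ stdSimplex ℝ I) : ∑ i, actionProb ξ χ i = 1 := by
  simp only [actionProb]
  rw [Finset.sum_comm]
  calc (∑ ℓ, ∑ i, ξ ℓ * χ ℓ i) = ∑ ℓ, ξ ℓ * ∑ i, χ ℓ i := by simp [Finset.mul_sum]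
    _ = 1 := by
      have : ∀ ℓ, ξ ℓ * ∑ i, χ ℓ i = ξ ℓ := fun ℓ => by rw [(hχ ℓ).2, mul_one]
      simp only [this]; exact hξ.2

lemma actionProb_nonneg {ξ : K → ℝ} {χ : K → I → ℝ} (hξ : ∀ ℓ, 0 ≤ ξ ℓ)
    (hχ : ∀ ℓ i, 0 ≤ χ ℓ i) (i : I) : 0 ≤ actionProb ξ χ i :=
  Finset.sum_nonneg fun ℓ _ => mul_nonneg (hξ ℓ) (hχ ℓ i)

lemma posterior_mem {ξ : K → ℝ} {χ : K → I → ℝ} (hξ : ∀ ℓ, 0 ≤ ξ ℓ)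
    (hχ : ∀ ℓ i, 0 ≤ χ ℓ i) {i : I} (ha : 0 < actionProb ξ χ i) :
    posterior ξ χ i ∈ stdSimplex ℝ K := by
  rw [mem_simplex_iff]
  constructor
  · intro ℓ
    exact div_nonneg (mul_nonneg (hξ ℓ) (hχ ℓ i)) ha.le
  · simp only [posterior]
    rw [← Finset.sum_div]
    rw [div_eq_one_iff_eq ha.ne']
    rfl

lemma onestage_nonneg {G : K → I → J → ℝ} (hG : ∀ ℓ i j, 0 ≤ G ℓ i j) {ξ : K → ℝ}
    {χ : K → I → ℝ} (hξ : ∀ ℓ, 0 ≤ ξ ℓ) (hχ : ∀ ℓ i, 0 ≤ χ ℓ i) :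
    0 ≤ onestagePayoff G ξ χ :=
  le_ciInf fun j => Finset.sum_nonneg fun ℓ _ => mul_nonneg (hξ ℓ)
    (Finset.sum_nonneg fun i _ => mul_nonneg (hχ ℓ i) (hG ℓ i j))

lemma onestage_le {G : K → I → J → ℝ} {C : ℝ} (hGC : ∀ ℓ i j, G ℓ i j ≤ C)
    {ξ : K → ℝ} {χ : K → I → ℝ} (hξ : ξ ∈ stdSimplex ℝ K)
    (hχ : ∀ ℓ, χ ℓ ∈ stdSimplex ℝ I) (hχ0 : ∀ ℓ i, 0 ≤ χ ℓ i) :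
    onestagePayoff G ξ χ ≤ C := by
  obtain ⟨j⟩ := ‹Nonempty J›
  refine le_trans (ciInf_le (Finite.bddBelow_range _) j) ?_
  calc (∑ ℓ, ξ ℓ * ∑ i, χ ℓ i * G ℓ i j) ≤ ∑ ℓ, ξ ℓ * C := by
        refine Finset.sum_le_sum fun ℓ _ => mul_le_mul_of_nonneg_left ?_ (hξ.1 ℓ)
        calc (∑ i, χ ℓ i * G ℓ i j) ≤ ∑ i, χ ℓ i * C :=
              Finset.sum_le_sum fun i _ => mul_le_mul_of_nonneg_left (hGC ℓ i j) (hχ0 ℓ i)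
          _ = C := by rw [← Finset.sum_mul, (hχ ℓ).2, one_mul]
    _ = C := by rw [← Finset.sum_mul, hξ.2, one_mul]

/-- weighted sum of `W` at updated posteriors: upper bound. -/
lemma weighted_le {M : Matrix K K ℝ} (hM : IsStochastic M) {ξ : K → ℝ} {χ : K → I → ℝ}
    (hξ : ξ ∈ stdSimplex ℝ K) (hχ : ∀ ℓ, χ ℓ ∈ stdSimplex ℝ I)
    {W : (K → ℝ) → ℝ} {B : ℝ} (hW : ∀ ζ ∈ stdSimplex ℝ K, W ζ ≤ B) :
    ∑ i, actionProb ξ χ i * W (Matrix.vecMul (posterior ξ χ i) M) ≤ B := by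
  have h1 : ∀ i : I, actionProb ξ χ i * W (Matrix.vecMul (posterior ξ χ i) M)
      ≤ actionProb ξ χ i * B := by
    intro i
    rcases lt_or_eq_of_le (actionProb_nonneg hξ.1 (fun ℓ i => (hχ ℓ).1 i) i) with h | h
    · exact mul_le_mul_of_nonneg_left
        (hW _ (vecMul_mem hM (posterior_mem hξ.1 (fun ℓ i => (hχ ℓ).1 i) h))) h.le
    · rw [← h]; simp
  calc (∑ i, actionProb ξ χ i * W (Matrix.vecMul (posterior ξ χ i) M))
      ≤ ∑ i, actionProb ξ χ i * B := Finset.sum_le_sum fun i _ => h1 i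
    _ = B := by rw [← Finset.sum_mul, sum_actionProb hξ hχ, one_mul]

lemma weighted_ge {M : Matrix K K ℝ} (hM : IsStochastic M) {ξ : K → ℝ} {χ : K → I → ℝ}
    (hξ : ξ ∈ stdSimplex ℝ K) (hχ : ∀ ℓ, χ ℓ ∈ stdSimplex ℝ I)
    {W : (K → ℝ) → ℝ} {b : ℝ} (hW : ∀ ζ ∈ stdSimplex ℝ K, b ≤ W ζ) :
    b ≤ ∑ i, actionProb ξ χ i * W (Matrix.vecMul (posterior ξ χ i) M) := by
  have h1 : ∀ i : I, actionProb ξ χ i * b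
      ≤ actionProb ξ χ i * W (Matrix.vecMul (posterior ξ χ i) M) := by
    intro i
    rcases lt_or_eq_of_le (actionProb_nonneg hξ.1 (fun ℓ i => (hχ ℓ).1 i) i) with h | h
    · exact mul_le_mul_of_nonneg_left
        (hW _ (vecMul_mem hM (posterior_mem hξ.1 (fun ℓ i => (hχ ℓ).1 i) h))) h.le
    · rw [← h]; simp
  calc b = ∑ i, actionProb ξ χ i * b := by rw [← Finset.sum_mul, sum_actionProb hξ hχ, one_mul]
    _ ≤ _ := Finset.sum_le_sum fun i _ => h1 i




def gVal (M : Matrix K K ℝ) (G : K → I → J → ℝ) (α β : ℝ) (W : (K → ℝ) → ℝ)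
    (ξ : K → ℝ) (χ : K → I → ℝ) : ℝ :=
  α * onestagePayoff G ξ χ + β * ∑ i, actionProb ξ χ i * W (Matrix.vecMul (posterior ξ χ i) M)

def gSet (M : Matrix K K ℝ) (G : K → I → J → ℝ) (α β : ℝ) (W : (K → ℝ) → ℝ)
    (ξ : K → ℝ) : Set ℝ :=
  { x : ℝ | ∃ χ : K → I → ℝ, (∀ ℓ, χ ℓ ∈ stdSimplex ℝ I) ∧ x = gVal M G α β W ξ χ }

def uchi (K I : Type*) [Fintype I] : K → I → ℝ := fun _ _ => (Fintype.card I : ℝ)⁻¹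

lemma card_I_pos [Nonempty I] : (0:ℝ) < (Fintype.card I : ℝ) := by
  exact_mod_cast Fintype.card_pos

lemma uchi_mem [Nonempty I] : ∀ ℓ : K, uchi K I ℓ ∈ stdSimplex ℝ I := by
  intro ℓ
  constructor
  · intro i; exact inv_nonneg.mpr (card_I_pos (I := I)).le
  · simp [uchi, Finset.sum_const, Finset.card_univ, nsmul_eq_mul,
      mul_inv_cancel₀ (card_I_pos (I := I)).ne']

lemma actionProb_uchi [Nonempty I] {ξ : K → ℝ} (hξ : ∑ ℓ, ξ ℓ = 1) (i : I) :
    actionProb ξ (uchi K I) i = (Fintype.card I : ℝ)⁻¹ := by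
  simp only [actionProb, uchi, ← Finset.sum_mul, hξ, one_mul]

lemma posterior_uchi [Nonempty I] {ξ : K → ℝ} (hξ : ∑ ℓ, ξ ℓ = 1) (i : I) :
    posterior ξ (uchi K I) i = ξ := by
  funext ℓ
  simp only [posterior, actionProb_uchi hξ, uchi]
  rw [mul_div_assoc, div_self (inv_ne_zero (card_I_pos (I := I)).ne'), mul_one]

lemma gVal_uchi [Nonempty I] (M : Matrix K K ℝ) (G : K → I → J → ℝ) (α β : ℝ)
    (W : (K → ℝ) → ℝ) {ξ : K → ℝ} (hξ : ∑ ℓ, ξ ℓ = 1) :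
    gVal M G α β W ξ (uchi K I) =
      α * onestagePayoff G ξ (uchi K I) + β * W (Matrix.vecMul ξ M) := by
  simp only [gVal]
  congr 1
  congr 1
  have : ∀ i : I, actionProb ξ (uchi K I) i * W (Matrix.vecMul (posterior ξ (uchi K I) i) M)
      = (Fintype.card I : ℝ)⁻¹ * W (Matrix.vecMul ξ M) := by
    intro i; rw [actionProb_uchi hξ, posterior_uchi hξ]
  rw [Finset.sum_congr rfl fun i _ => this i]
  rw [Finset.sum_const, Finset.card_univ, nsmul_eq_mul, ← mul_assoc,
    mul_inv_cancel₀ (card_I_pos (I := I)).ne', one_mul]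

lemma gSet_nonempty [Nonempty I] (M : Matrix K K ℝ) (G : K → I → J → ℝ) (α β : ℝ)
    (W : (K → ℝ) → ℝ) (ξ : K → ℝ) : (gSet M G α β W ξ).Nonempty :=
  ⟨_, ⟨uchi K I, uchi_mem, rfl⟩⟩

lemma gVal_le {M : Matrix K K ℝ} (hM : IsStochastic M) {G : K → I → J → ℝ} {C : ℝ}
    (hGC : ∀ ℓ i j, G ℓ i j ≤ C) {α β : ℝ} (hα : 0 ≤ α) (hβ : 0 ≤ β)
    {W : (K → ℝ) → ℝ} {B : ℝ} (hW : ∀ ζ ∈ stdSimplex ℝ K, W ζ ≤ B)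
    {ξ : K → ℝ} (hξ : ξ ∈ stdSimplex ℝ K) {χ : K → I → ℝ}
    (hχ : ∀ ℓ, χ ℓ ∈ stdSimplex ℝ I) :
    gVal M G α β W ξ χ ≤ α * C + β * B := by
  have h1 : onestagePayoff G ξ χ ≤ C := onestage_le hGC hξ hχ (fun ℓ i => (hχ ℓ).1 i)
  have h2 := weighted_le hM hξ hχ hW
  exact add_le_add (mul_le_mul_of_nonneg_left h1 hα) (mul_le_mul_of_nonneg_left h2 hβ)

lemma gVal_nonneg {M : Matrix K K ℝ} (hM : IsStochastic M) {G : K → I → J → ℝ}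
    (hG : ∀ ℓ i j, 0 ≤ G ℓ i j) {α β : ℝ} (hα : 0 ≤ α) (hβ : 0 ≤ β)
    {W : (K → ℝ) → ℝ} (hW : ∀ ζ ∈ stdSimplex ℝ K, 0 ≤ W ζ)
    {ξ : K → ℝ} (hξ : ξ ∈ stdSimplex ℝ K) {χ : K → I → ℝ}
    (hχ : ∀ ℓ, χ ℓ ∈ stdSimplex ℝ I) :
    0 ≤ gVal M G α β W ξ χ := by
  have h1 : 0 ≤ onestagePayoff G ξ χ := onestage_nonneg hG hξ.1 (fun ℓ i => (hχ ℓ).1 i)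
  have h2 := weighted_ge hM hξ hχ hW
  exact add_nonneg (mul_nonneg hα h1) (mul_nonneg hβ h2)

lemma gSet_bddAbove {M : Matrix K K ℝ} (hM : IsStochastic M) {G : K → I → J → ℝ} {C : ℝ}
    (hGC : ∀ ℓ i j, G ℓ i j ≤ C) {α β : ℝ} (hα : 0 ≤ α) (hβ : 0 ≤ β)
    {W : (K → ℝ) → ℝ} {B : ℝ} (hW : ∀ ζ ∈ stdSimplex ℝ K, W ζ ≤ B)
    {ξ : K → ℝ} (hξ : ξ ∈ stdSimplex ℝ K) :
    BddAbove (gSet M G α β W ξ) := by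
  refine ⟨α * C + β * B, ?_⟩
  rintro x ⟨χ, hχ, rfl⟩
  exact gVal_le hM hGC hα hβ hW hξ hχ


def dist1 {K : Type*} [Fintype K] (p q : K → ℝ) : ℝ := ∑ ℓ, |p ℓ - q ℓ|

section
variable {K I J : Type*} [Fintype K] [Fintype I] [Fintype J] [Nonempty J] [Nonempty I]

lemma dist1_le_two {p q : K → ℝ} (hp : p ∈ stdSimplex ℝ K) (hq : q ∈ stdSimplex ℝ K) :
    dist1 p q ≤ 2 := by
  have : ∀ ℓ : K, |p ℓ - q ℓ| ≤ p ℓ + q ℓ := by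
    intro ℓ
    have h1 := hp.1 ℓ; have h2 := hq.1 ℓ
    rw [abs_le]; constructor <;> linarith
  calc dist1 p q ≤ ∑ ℓ, (p ℓ + q ℓ) := Finset.sum_le_sum fun ℓ _ => this ℓ
    _ = 2 := by rw [Finset.sum_add_distrib, hp.2, hq.2]; norm_num

lemma doeblin {P : Matrix K K ℝ} (hP : IsStochastic P) {π : K → ℝ}
    (hπ : Matrix.vecMul π P = π) (hπΔ : π ∈ stdSimplex ℝ K) {e : ℝ} (he : 0 ≤ e)
    (hPe : ∀ i j, e ≤ P i j) {p : K → ℝ} (hp : p ∈ stdSimplex ℝ K) :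
    dist1 (Matrix.vecMul p P) π ≤ (1 - (Fintype.card K : ℝ) * e) * dist1 p π := by
  have hsum0 : ∑ i, (p i - π i) = 0 := by
    rw [Finset.sum_sub_distrib, hp.2, hπΔ.2, sub_self]
  have hstep : ∀ j : K, |Matrix.vecMul p P j - π j| ≤ ∑ i, |p i - π i| * (P i j - e) := by
    intro j
    have h1 : Matrix.vecMul p P j - π j = ∑ i, (p i - π i) * (P i j - e) := by
      have hπj : π j = ∑ i, π i * P i j := by
        conv_lhs => rw [← hπ]
        rw [vecMul_apply']
      have h2 : Matrix.vecMul p P j - π j = ∑ i, (p i - π i) * P i j := by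
        rw [vecMul_apply', hπj, ← Finset.sum_sub_distrib]
        exact Finset.sum_congr rfl fun i _ => by ring
      rw [h2]
      have h3 : ∑ i, (p i - π i) * (P i j - e) = (∑ i, (p i - π i) * P i j) - (∑ i, (p i - π i)) * e := by
        rw [Finset.sum_mul, ← Finset.sum_sub_distrib]
        exact Finset.sum_congr rfl fun i _ => by ring
      rw [h3, hsum0, zero_mul, sub_zero]
    rw [h1]
    refine le_trans (Finset.abs_sum_le_sum_abs _ _) ?_
    refine Finset.sum_le_sum fun i _ => ?_
    rw [abs_mul, abs_of_nonneg (by linarith [hPe i j] : (0:ℝ) ≤ P i j - e)]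
  calc dist1 (Matrix.vecMul p P) π ≤ ∑ j, ∑ i, |p i - π i| * (P i j - e) :=
        Finset.sum_le_sum fun j _ => hstep j
    _ = ∑ i, |p i - π i| * (1 - (Fintype.card K : ℝ) * e) := by
        rw [Finset.sum_comm]
        refine Finset.sum_congr rfl fun i _ => ?_
        rw [← Finset.mul_sum]
        congr 1
        rw [Finset.sum_sub_distrib, hP.2 i, Finset.sum_const, Finset.card_univ, nsmul_eq_mul]
    _ = (1 - (Fintype.card K : ℝ) * e) * dist1 p π := by
        rw [← Finset.sum_mul, mul_comm]; rfl

lemma mix {P : Matrix K K ℝ} [DecidableEq K] (hP : IsStochastic P) {π : K → ℝ}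
    (hπ : Matrix.vecMul π P = π) (hπΔ : π ∈ stdSimplex ℝ K) {e : ℝ} (he : 0 ≤ e)
    (hPe : ∀ i j, e ≤ P i j) (hκ : (Fintype.card K : ℝ) * e ≤ 1) :
    ∀ k : ℕ, ∀ p ∈ stdSimplex ℝ K,
      dist1 (Matrix.vecMul p (P ^ k)) π ≤ (1 - (Fintype.card K : ℝ) * e) ^ k * 2 := by
  intro k
  induction k with
  | zero => intro p hp; simpa [Matrix.vecMul_one] using dist1_le_two hp hπΔ
  | succ k ih =>
    intro p hp
    rw [pow_succ, ← Matrix.vecMul_vecMul]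
    calc dist1 (Matrix.vecMul (Matrix.vecMul p (P ^ k)) P) π
        ≤ (1 - (Fintype.card K : ℝ) * e) * dist1 (Matrix.vecMul p (P ^ k)) π :=
          doeblin hP hπ hπΔ he hPe (vecMul_mem (stoch_pow hP k) hp)
      _ ≤ (1 - (Fintype.card K : ℝ) * e) * ((1 - (Fintype.card K : ℝ) * e) ^ k * 2) := by
          refine mul_le_mul_of_nonneg_left (ih p hp) (by linarith)
      _ = (1 - (Fintype.card K : ℝ) * e) ^ (k + 1) * 2 := by ring

end

section
variable {K I J : Type*} [Fintype K] [Fintype I] [Fintype J] [Nonempty J] [Nonempty I] [Nonempty K]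
variable {M : Matrix K K ℝ} {G : K → I → J → ℝ} {C δ : ℝ} {Vd : (K → ℝ) → ℝ}

lemma combo_mem {t : ℝ} (ht : t ∈ Set.Icc (0:ℝ) 1) {p q : K → ℝ} (hp : p ∈ stdSimplex ℝ K)
    (hq : q ∈ stdSimplex ℝ K) : (fun ℓ => t * p ℓ + (1 - t) * q ℓ) ∈ stdSimplex ℝ K := by
  constructor
  · intro ℓ
    have := hp.1 ℓ; have := hq.1 ℓ; have := ht.1; have := ht.2
    have h1 : (0:ℝ) ≤ 1 - t := by linarith
    exact add_nonneg (mul_nonneg ht.1 (hp.1 ℓ)) (mul_nonneg h1 (hq.1 ℓ))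
  · simp only [Finset.sum_add_distrib, ← Finset.mul_sum, hp.2, hq.2]; ring

lemma vecMul_comb (s : ℝ) (u v : K → ℝ) (M : Matrix K K ℝ) :
    Matrix.vecMul (fun ℓ => s * u ℓ + (1 - s) * v ℓ) M =
      fun j => s * Matrix.vecMul u M j + (1 - s) * Matrix.vecMul v M j := by
  funext j
  simp only [vecMul_apply', Finset.mul_sum, ← Finset.sum_add_distrib]
  exact Finset.sum_congr rfl fun i _ => by ring

lemma le_V (hM : IsStochastic M) (hGC : ∀ ℓ i j, G ℓ i j ≤ C) (hδ0 : 0 ≤ δ) (hδ1 : δ ≤ 1)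
    (hVC : ∀ ζ ∈ stdSimplex ℝ K, Vd ζ ≤ C)
    (hBell : ∀ ζ ∈ stdSimplex ℝ K, Vd ζ = sSup (gSet M G (1-δ) δ Vd ζ))
    {ξ : K → ℝ} (hξ : ξ ∈ stdSimplex ℝ K) {χ : K → I → ℝ}
    (hχ : ∀ ℓ, χ ℓ ∈ stdSimplex ℝ I) :
    gVal M G (1-δ) δ Vd ξ χ ≤ Vd ξ := by
  rw [hBell ξ hξ]
  exact le_csSup (gSet_bddAbove hM hGC (by linarith) hδ0 hVC hξ) ⟨χ, hχ, rfl⟩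

lemma V_le (hBell : ∀ ζ ∈ stdSimplex ℝ K, Vd ζ = sSup (gSet M G (1-δ) δ Vd ζ))
    {ξ : K → ℝ} (hξ : ξ ∈ stdSimplex ℝ K) {b : ℝ}
    (h : ∀ χ : K → I → ℝ, (∀ ℓ, χ ℓ ∈ stdSimplex ℝ I) → gVal M G (1-δ) δ Vd ξ χ ≤ b) :
    Vd ξ ≤ b := by
  rw [hBell ξ hξ]
  exact csSup_le (gSet_nonempty M G _ _ Vd ξ) (by rintro x ⟨χ, hχ, rfl⟩; exact h χ hχ)

lemma exists_chi (hBell : ∀ ζ ∈ stdSimplex ℝ K, Vd ζ = sSup (gSet M G (1-δ) δ Vd ζ))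
    {ξ : K → ℝ} (hξ : ξ ∈ stdSimplex ℝ K) {ε : ℝ} (hε : 0 < ε) :
    ∃ χ : K → I → ℝ, (∀ ℓ, χ ℓ ∈ stdSimplex ℝ I) ∧
      Vd ξ - ε < gVal M G (1-δ) δ Vd ξ χ := by
  have hlt : Vd ξ - ε < sSup (gSet M G (1-δ) δ Vd ξ) := by
    rw [← hBell ξ hξ]; linarith
  obtain ⟨x, hxS, hx⟩ := exists_lt_of_lt_csSup (gSet_nonempty M G _ _ Vd ξ) hlt
  obtain ⟨χ, hχ, rfl⟩ := hxS
  exact ⟨χ, hχ, hx⟩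

lemma nonrev (hM : IsStochastic M) (hG : ∀ ℓ i j, 0 ≤ G ℓ i j)
    (hGC : ∀ ℓ i j, G ℓ i j ≤ C) (hδ0 : 0 ≤ δ) (hδ1 : δ ≤ 1)
    (hVC : ∀ ζ ∈ stdSimplex ℝ K, Vd ζ ≤ C)
    (hBell : ∀ ζ ∈ stdSimplex ℝ K, Vd ζ = sSup (gSet M G (1-δ) δ Vd ζ))
    {ξ : K → ℝ} (hξ : ξ ∈ stdSimplex ℝ K) :
    δ * Vd (Matrix.vecMul ξ M) ≤ Vd ξ := by
  have h1 := gVal_uchi M G (1-δ) δ Vd hξ.2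
  have h2 : (0:ℝ) ≤ (1-δ) * onestagePayoff G ξ (uchi K I) :=
    mul_nonneg (by linarith) (onestage_nonneg hG hξ.1 (fun ℓ i => (uchi_mem ℓ).1 i))
  have h3 := le_V hM hGC hδ0 hδ1 hVC hBell hξ (uchi_mem (K := K) (I := I))
  rw [h1] at h3
  linarith

lemma nonrev_pow [DecidableEq K] (hM : IsStochastic M) (hG : ∀ ℓ i j, 0 ≤ G ℓ i j)
    (hGC : ∀ ℓ i j, G ℓ i j ≤ C) (hδ0 : 0 ≤ δ) (hδ1 : δ ≤ 1)
    (hVC : ∀ ζ ∈ stdSimplex ℝ K, Vd ζ ≤ C)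
    (hBell : ∀ ζ ∈ stdSimplex ℝ K, Vd ζ = sSup (gSet M G (1-δ) δ Vd ζ))
    (n : ℕ) {ξ : K → ℝ} (hξ : ξ ∈ stdSimplex ℝ K) :
    δ ^ n * Vd (Matrix.vecMul ξ (M ^ n)) ≤ Vd ξ := by
  induction n generalizing ξ with
  | zero => simp [Matrix.vecMul_one]
  | succ n ih =>
    have hmem : Matrix.vecMul ξ M ∈ stdSimplex ℝ K := vecMul_mem hM hξ
    have h1 := ih hmem
    have h2 : δ ^ (n+1) * Vd (Matrix.vecMul ξ (M ^ (n+1)))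
        = δ * (δ ^ n * Vd (Matrix.vecMul (Matrix.vecMul ξ M) (M ^ n))) := by
      rw [Matrix.vecMul_vecMul, ← pow_succ']
      ring
    rw [h2]
    calc δ * (δ ^ n * Vd (Matrix.vecMul (Matrix.vecMul ξ M) (M ^ n)))
        ≤ δ * Vd (Matrix.vecMul ξ M) := mul_le_mul_of_nonneg_left h1 hδ0
      _ ≤ Vd ξ := nonrev hM hG hGC hδ0 hδ1 hVC hBell hξ

end

section
variable {K I J : Type*} [Fintype K] [Fintype I] [Fintype J] [Nonempty J] [Nonempty I] [Nonempty K]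
variable {M : Matrix K K ℝ} {G : K → I → J → ℝ} {C δ : ℝ} {Vd : (K → ℝ) → ℝ}

lemma V_concave (hM : IsStochastic M) (hG : ∀ ℓ i j, 0 ≤ G ℓ i j)
    (hGC : ∀ ℓ i j, G ℓ i j ≤ C) (hδ0 : 0 ≤ δ) (hδ1 : δ < 1)
    (hV0 : ∀ ζ ∈ stdSimplex ℝ K, 0 ≤ Vd ζ) (hVC : ∀ ζ ∈ stdSimplex ℝ K, Vd ζ ≤ C)
    (hBell : ∀ ζ ∈ stdSimplex ℝ K, Vd ζ = sSup (gSet M G (1-δ) δ Vd ζ)) :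
    ∀ t ∈ Set.Icc (0:ℝ) 1, ∀ p ∈ stdSimplex ℝ K, ∀ q ∈ stdSimplex ℝ K,
      t * Vd p + (1-t) * Vd q ≤ Vd (fun ℓ => t * p ℓ + (1-t) * q ℓ) := by
  classical
  set S : Set ℝ := { x : ℝ | ∃ t p q, t ∈ Set.Icc (0:ℝ) 1 ∧ p ∈ stdSimplex ℝ K ∧
      q ∈ stdSimplex ℝ K ∧
      x = t * Vd p + (1-t) * Vd q - Vd (fun ℓ => t * p ℓ + (1-t) * q ℓ) } with hSdef
  have hukm : (fun (_ : K) => (Fintype.card K : ℝ)⁻¹) ∈ stdSimplex ℝ K := by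
    constructor
    · intro ℓ; exact inv_nonneg.mpr (card_I_pos (I := K)).le
    · simp [Finset.sum_const, Finset.card_univ, nsmul_eq_mul,
        mul_inv_cancel₀ (card_I_pos (I := K)).ne']
  have h0S : (0:ℝ) ∈ S := by
    refine ⟨1, (fun _ => (Fintype.card K : ℝ)⁻¹), (fun _ => (Fintype.card K : ℝ)⁻¹),
      ⟨zero_le_one, le_refl 1⟩, hukm, hukm, ?_⟩
    have hfun : (fun _ : K => 1 * (Fintype.card K : ℝ)⁻¹ + (1-1) * (Fintype.card K : ℝ)⁻¹)
        = (fun _ : K => (Fintype.card K : ℝ)⁻¹) := funext fun ℓ => by ring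
    rw [hfun]; ring
  have hbdd : BddAbove S := by
    refine ⟨C, ?_⟩
    rintro x ⟨t, p, q, ht, hp, hq, rfl⟩
    have h1 : Vd p ≤ C := hVC p hp
    have h2 : Vd q ≤ C := hVC q hq
    have h3 : 0 ≤ Vd (fun ℓ => t * p ℓ + (1-t) * q ℓ) := hV0 _ (combo_mem ht hp hq)
    have h4 := mul_le_mul_of_nonneg_left h1 ht.1
    have h5 := mul_le_mul_of_nonneg_left h2 (by linarith [ht.2] : (0:ℝ) ≤ 1 - t)
    linarith
  set D := sSup S with hDdef
  have hD0 : 0 ≤ D := le_csSup hbdd h0S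
  have hD_elem : ∀ (s : ℝ) (u v : K → ℝ), s ∈ Set.Icc (0:ℝ) 1 → u ∈ stdSimplex ℝ K →
      v ∈ stdSimplex ℝ K →
      s * Vd u + (1-s) * Vd v - Vd (fun ℓ => s * u ℓ + (1-s) * v ℓ) ≤ D :=
    fun s u v hs hu hv => le_csSup hbdd ⟨s, u, v, hs, hu, hv, rfl⟩
  have hkeyD : ∀ ε : ℝ, 0 < ε → D ≤ δ * D + 2 * ε := by
    intro ε hε
    obtain ⟨x, hxS, hx⟩ := exists_lt_of_lt_csSup ⟨0, h0S⟩ (by linarith : D - ε < sSup S)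
    obtain ⟨t, p, q, ht, hp, hq, rfl⟩ := hxS
    by_cases ht0 : t = 0
    · subst ht0
      have hfun : (fun ℓ : K => 0 * p ℓ + (1-0) * q ℓ) = q := funext fun ℓ => by ring
      rw [hfun] at hx
      have := mul_nonneg hδ0 hD0
      linarith
    by_cases ht1 : t = 1
    · subst ht1
      have hfun : (fun ℓ : K => 1 * p ℓ + (1-1) * q ℓ) = p := funext fun ℓ => by ring
      rw [hfun] at hx
      have := mul_nonneg hδ0 hD0
      linarith
    have ht0' : 0 < t := lt_of_le_of_ne ht.1 (Ne.symm ht0)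
    have ht1' : t < 1 := lt_of_le_of_ne ht.2 ht1
    obtain ⟨χ1, hχ1, hg1⟩ := exists_chi hBell hp hε
    obtain ⟨χ2, hχ2, hg2⟩ := exists_chi hBell hq hε
    set ξ : K → ℝ := fun ℓ => t * p ℓ + (1-t) * q ℓ with hξdef
    have hξΔ : ξ ∈ stdSimplex ℝ K := combo_mem ht hp hq
    set χ : K → I → ℝ := fun ℓ i => if ξ ℓ = 0 then χ1 ℓ i
      else (t * p ℓ * χ1 ℓ i + (1-t) * q ℓ * χ2 ℓ i) / ξ ℓ with hχdef
    have hzero : ∀ ℓ, ξ ℓ = 0 → p ℓ = 0 ∧ q ℓ = 0 := by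
      intro ℓ h0
      have h3 : t * p ℓ + (1-t) * q ℓ = 0 := h0
      have h1 : 0 ≤ t * p ℓ := mul_nonneg ht0'.le (hp.1 ℓ)
      have h2 : 0 ≤ (1-t) * q ℓ := mul_nonneg (by linarith) (hq.1 ℓ)
      constructor
      · have h4 : t * p ℓ = 0 := by linarith
        rcases mul_eq_zero.mp h4 with h | h
        · exact absurd h ht0'.ne'
        · exact h
      · have h4 : (1-t) * q ℓ = 0 := by linarith
        rcases mul_eq_zero.mp h4 with h | h
        · exact absurd h (by intro hc; linarith [hc] : (1:ℝ) - t ≠ 0)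
        · exact h
    have hkey : ∀ ℓ i, ξ ℓ * χ ℓ i = t * p ℓ * χ1 ℓ i + (1-t) * q ℓ * χ2 ℓ i := by
      intro ℓ i
      by_cases h0 : ξ ℓ = 0
      · obtain ⟨hp0, hq0⟩ := hzero ℓ h0
        simp [h0, hp0, hq0]
      · simp only [hχdef, if_neg h0]
        field_simp
    have hchiv : ∀ ℓ, χ ℓ ∈ stdSimplex ℝ I := by
      intro ℓ
      by_cases h0 : ξ ℓ = 0
      · have hcc : χ ℓ = χ1 ℓ := by funext i; simp [hχdef, h0]
        rw [hcc]; exact hχ1 ℓ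
      · have hpos : 0 < ξ ℓ := lt_of_le_of_ne (hξΔ.1 ℓ) (Ne.symm h0)
        constructor
        · intro i
          simp only [hχdef, if_neg h0]
          exact div_nonneg (add_nonneg
            (mul_nonneg (mul_nonneg ht0'.le (hp.1 ℓ)) ((hχ1 ℓ).1 i))
            (mul_nonneg (mul_nonneg (by linarith) (hq.1 ℓ)) ((hχ2 ℓ).1 i))) hpos.le
        · simp only [hχdef, if_neg h0]
          rw [← Finset.sum_div, div_eq_one_iff_eq h0]
          rw [Finset.sum_add_distrib]
          have e1 : (∑ i, t * p ℓ * χ1 ℓ i) = t * p ℓ := by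
            rw [← Finset.mul_sum, (hχ1 ℓ).2, mul_one]
          have e2 : (∑ i, (1-t) * q ℓ * χ2 ℓ i) = (1-t) * q ℓ := by
            rw [← Finset.mul_sum, (hχ2 ℓ).2, mul_one]
          rw [e1, e2]
    have ha : ∀ i, actionProb ξ χ i = t * actionProb p χ1 i + (1-t) * actionProb q χ2 i := by
      intro i
      show (∑ ℓ, ξ ℓ * χ ℓ i) = _
      rw [show t * actionProb p χ1 i + (1-t) * actionProb q χ2 i
          = ∑ ℓ, (t * (p ℓ * χ1 ℓ i) + (1-t) * (q ℓ * χ2 ℓ i)) by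
        rw [Finset.sum_add_distrib, ← Finset.mul_sum, ← Finset.mul_sum]; rfl]
      exact Finset.sum_congr rfl fun ℓ _ => by rw [hkey ℓ i]; ring
    have hr : t * onestagePayoff G p χ1 + (1-t) * onestagePayoff G q χ2
        ≤ onestagePayoff G ξ χ := by
      refine le_ciInf fun j => ?_
      have l1 : ∀ (u : K → ℝ) (ψ : K → I → ℝ),
          (∑ ℓ, u ℓ * ∑ i, ψ ℓ i * G ℓ i j) = ∑ ℓ, ∑ i, (u ℓ * ψ ℓ i) * G ℓ i j :=
        fun u ψ => Finset.sum_congr rfl fun ℓ _ => by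
          rw [Finset.mul_sum]; exact Finset.sum_congr rfl fun i _ => by ring
      have hFj : (∑ ℓ, ξ ℓ * ∑ i, χ ℓ i * G ℓ i j)
          = t * (∑ ℓ, p ℓ * ∑ i, χ1 ℓ i * G ℓ i j)
            + (1-t) * (∑ ℓ, q ℓ * ∑ i, χ2 ℓ i * G ℓ i j) := by
        rw [l1 ξ χ, l1 p χ1, l1 q χ2, Finset.mul_sum, Finset.mul_sum,
          ← Finset.sum_add_distrib]
        refine Finset.sum_congr rfl fun ℓ _ => ?_
        rw [Finset.mul_sum, Finset.mul_sum, ← Finset.sum_add_distrib]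
        refine Finset.sum_congr rfl fun i _ => ?_
        rw [show (ξ ℓ * χ ℓ i) * G ℓ i j
            = (t * p ℓ * χ1 ℓ i + (1-t) * q ℓ * χ2 ℓ i) * G ℓ i j by rw [hkey ℓ i]]
        ring
      show _ ≤ ∑ ℓ, ξ ℓ * ∑ i, χ ℓ i * G ℓ i j
      rw [hFj]
      have b1 : onestagePayoff G p χ1 ≤ ∑ ℓ, p ℓ * ∑ i, χ1 ℓ i * G ℓ i j :=
        ciInf_le (Finite.bddBelow_range _) j
      have b2 : onestagePayoff G q χ2 ≤ ∑ ℓ, q ℓ * ∑ i, χ2 ℓ i * G ℓ i j :=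
        ciInf_le (Finite.bddBelow_range _) j
      exact add_le_add (mul_le_mul_of_nonneg_left b1 ht.1)
        (mul_le_mul_of_nonneg_left b2 (by linarith))
    have hterm : ∀ i,
        t * (actionProb p χ1 i * Vd (Matrix.vecMul (posterior p χ1 i) M))
          + (1-t) * (actionProb q χ2 i * Vd (Matrix.vecMul (posterior q χ2 i) M))
        ≤ actionProb ξ χ i * Vd (Matrix.vecMul (posterior ξ χ i) M)
          + actionProb ξ χ i * D := by
      intro i
      have ha1 : 0 ≤ actionProb p χ1 i := actionProb_nonneg hp.1 (fun ℓ i => (hχ1 ℓ).1 i) i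
      have ha2 : 0 ≤ actionProb q χ2 i := actionProb_nonneg hq.1 (fun ℓ i => (hχ2 ℓ).1 i) i
      have haξ : 0 ≤ actionProb ξ χ i := actionProb_nonneg hξΔ.1 (fun ℓ i => (hchiv ℓ).1 i) i
      have hDa : 0 ≤ actionProb ξ χ i * D := mul_nonneg haξ hD0
      have hai := ha i
      rcases eq_or_lt_of_le ha1 with h1 | h1 <;> rcases eq_or_lt_of_le ha2 with h2 | h2
      · have haz : actionProb ξ χ i = 0 := by rw [hai, ← h1, ← h2]; ring
        rw [← h1, ← h2, haz]
        simp
      · have h1' : actionProb p χ1 i = 0 := h1.symm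
        have haz : actionProb ξ χ i = (1-t) * actionProb q χ2 i := by
          rw [hai, h1']; ring
        have hz1 : ∀ ℓ, p ℓ * χ1 ℓ i = 0 := by
          have hsz : (∑ ℓ, p ℓ * χ1 ℓ i) = 0 := h1'
          intro ℓ
          exact (Finset.sum_eq_zero_iff_of_nonneg
            (fun ℓ _ => mul_nonneg (hp.1 ℓ) ((hχ1 ℓ).1 i))).mp hsz ℓ (Finset.mem_univ ℓ)
        have hpost : posterior ξ χ i = posterior q χ2 i := by
          funext ℓ
          show ξ ℓ * χ ℓ i / actionProb ξ χ i = q ℓ * χ2 ℓ i / actionProb q χ2 i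
          rw [hkey ℓ i]
          have e1 : t * p ℓ * χ1 ℓ i = 0 := by rw [mul_assoc, hz1 ℓ, mul_zero]
          rw [e1, zero_add, haz, mul_assoc]
          exact mul_div_mul_left _ _ (by intro hc; linarith [hc] : (1:ℝ) - t ≠ 0)
        rw [hpost, h1']
        have hv2 : actionProb ξ χ i * Vd (Matrix.vecMul (posterior q χ2 i) M)
            = (1-t) * (actionProb q χ2 i * Vd (Matrix.vecMul (posterior q χ2 i) M)) := by
          rw [haz]; ring
        linarith [hv2, hDa]
      · have h2' : actionProb q χ2 i = 0 := h2.symm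
        have haz : actionProb ξ χ i = t * actionProb p χ1 i := by
          rw [hai, h2']; ring
        have hz2 : ∀ ℓ, q ℓ * χ2 ℓ i = 0 := by
          have hsz : (∑ ℓ, q ℓ * χ2 ℓ i) = 0 := h2'
          intro ℓ
          exact (Finset.sum_eq_zero_iff_of_nonneg
            (fun ℓ _ => mul_nonneg (hq.1 ℓ) ((hχ2 ℓ).1 i))).mp hsz ℓ (Finset.mem_univ ℓ)
        have hpost : posterior ξ χ i = posterior p χ1 i := by
          funext ℓ
          show ξ ℓ * χ ℓ i / actionProb ξ χ i = p ℓ * χ1 ℓ i / actionProb p χ1 i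
          rw [hkey ℓ i]
          have e1 : (1-t) * q ℓ * χ2 ℓ i = 0 := by rw [mul_assoc, hz2 ℓ, mul_zero]
          rw [e1, add_zero, haz, mul_assoc]
          exact mul_div_mul_left _ _ ht0'.ne'
        rw [hpost, h2']
        have hv1 : actionProb ξ χ i * Vd (Matrix.vecMul (posterior p χ1 i) M)
            = t * (actionProb p χ1 i * Vd (Matrix.vecMul (posterior p χ1 i) M)) := by
          rw [haz]; ring
        linarith [hv1, hDa]
      · have hapos : 0 < actionProb ξ χ i := by
          rw [hai]
          have hx1 := mul_pos ht0' h1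
          have hx2 := mul_pos (by linarith : (0:ℝ) < 1 - t) h2
          linarith
        set μ := t * actionProb p χ1 i / actionProb ξ χ i with hμdef
        have hμ0 : 0 ≤ μ := div_nonneg (mul_nonneg ht.1 ha1) hapos.le
        have hμ1 : μ ≤ 1 := by
          rw [hμdef, div_le_one hapos, hai]
          have := mul_nonneg (by linarith : (0:ℝ) ≤ 1 - t) ha2
          linarith
        have hμa : μ * actionProb ξ χ i = t * actionProb p χ1 i := by
          rw [hμdef, div_mul_cancel₀ _ hapos.ne']
        have h1μ : (1 - μ) * actionProb ξ χ i = (1-t) * actionProb q χ2 i := by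
          have e : (1 - μ) * actionProb ξ χ i = actionProb ξ χ i - μ * actionProb ξ χ i := by
            ring
          rw [e, hμa, hai]; ring
        have hpost : posterior ξ χ i = fun ℓ =>
            μ * posterior p χ1 i ℓ + (1-μ) * posterior q χ2 i ℓ := by
          funext ℓ
          show ξ ℓ * χ ℓ i / actionProb ξ χ i
            = μ * (p ℓ * χ1 ℓ i / actionProb p χ1 i)
              + (1-μ) * (q ℓ * χ2 ℓ i / actionProb q χ2 i)
          have e1 : μ * (p ℓ * χ1 ℓ i / actionProb p χ1 i)
              = t * (p ℓ * χ1 ℓ i) / actionProb ξ χ i := by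
            rw [← mul_div_assoc, div_eq_div_iff h1.ne' hapos.ne']
            linear_combination (p ℓ * χ1 ℓ i) * hμa
          have e2 : (1-μ) * (q ℓ * χ2 ℓ i / actionProb q χ2 i)
              = (1-t) * (q ℓ * χ2 ℓ i) / actionProb ξ χ i := by
            rw [← mul_div_assoc, div_eq_div_iff h2.ne' hapos.ne']
            linear_combination (q ℓ * χ2 ℓ i) * h1μ
          rw [e1, e2, ← add_div, hkey ℓ i]
          congr 1
          ring
        have hcombo : Matrix.vecMul (posterior ξ χ i) M = fun j =>
            μ * Matrix.vecMul (posterior p χ1 i) M j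
              + (1-μ) * Matrix.vecMul (posterior q χ2 i) M j := by
          rw [hpost]; exact vecMul_comb μ _ _ M
        have hel := hD_elem μ (Matrix.vecMul (posterior p χ1 i) M)
          (Matrix.vecMul (posterior q χ2 i) M) ⟨hμ0, hμ1⟩
          (vecMul_mem hM (posterior_mem hp.1 (fun ℓ i => (hχ1 ℓ).1 i) h1))
          (vecMul_mem hM (posterior_mem hq.1 (fun ℓ i => (hχ2 ℓ).1 i) h2))
        have hVeq : Vd (Matrix.vecMul (posterior ξ χ i) M)
            = Vd (fun ℓ => μ * Matrix.vecMul (posterior p χ1 i) M ℓ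
                + (1-μ) * Matrix.vecMul (posterior q χ2 i) M ℓ) := by
          rw [hcombo]
        have hel2 : μ * Vd (Matrix.vecMul (posterior p χ1 i) M)
            + (1-μ) * Vd (Matrix.vecMul (posterior q χ2 i) M)
            ≤ Vd (Matrix.vecMul (posterior ξ χ i) M) + D := by
          rw [hVeq]; linarith [hel]
        have hmul := mul_le_mul_of_nonneg_left hel2 haξ
        have c1 : actionProb ξ χ i * (μ * Vd (Matrix.vecMul (posterior p χ1 i) M))
            = t * (actionProb p χ1 i * Vd (Matrix.vecMul (posterior p χ1 i) M)) := by
          rw [← mul_assoc, mul_comm (actionProb ξ χ i) μ, hμa, mul_assoc]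
        have c2 : actionProb ξ χ i * ((1-μ) * Vd (Matrix.vecMul (posterior q χ2 i) M))
            = (1-t) * (actionProb q χ2 i * Vd (Matrix.vecMul (posterior q χ2 i) M)) := by
          rw [← mul_assoc, mul_comm (actionProb ξ χ i) (1-μ), h1μ, mul_assoc]
        calc t * (actionProb p χ1 i * Vd (Matrix.vecMul (posterior p χ1 i) M))
              + (1-t) * (actionProb q χ2 i * Vd (Matrix.vecMul (posterior q χ2 i) M))
            = actionProb ξ χ i * (μ * Vd (Matrix.vecMul (posterior p χ1 i) M))
              + actionProb ξ χ i * ((1-μ) * Vd (Matrix.vecMul (posterior q χ2 i) M)) := by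
              rw [c1, c2]
          _ = actionProb ξ χ i * (μ * Vd (Matrix.vecMul (posterior p χ1 i) M)
              + (1-μ) * Vd (Matrix.vecMul (posterior q χ2 i) M)) := by ring
          _ ≤ actionProb ξ χ i * (Vd (Matrix.vecMul (posterior ξ χ i) M) + D) := hmul
          _ = actionProb ξ χ i * Vd (Matrix.vecMul (posterior ξ χ i) M)
              + actionProb ξ χ i * D := by ring
    -- assemble
    simp only [gVal] at hg1 hg2
    have hbell := le_V hM hGC hδ0 hδ1.le hVC hBell hξΔ hchiv
    simp only [gVal] at hbell
    have hL : (∑ i, (t * (actionProb p χ1 i * Vd (Matrix.vecMul (posterior p χ1 i) M))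
        + (1-t) * (actionProb q χ2 i * Vd (Matrix.vecMul (posterior q χ2 i) M))))
        = t * ∑ i, actionProb p χ1 i * Vd (Matrix.vecMul (posterior p χ1 i) M)
          + (1-t) * ∑ i, actionProb q χ2 i * Vd (Matrix.vecMul (posterior q χ2 i) M) := by
      rw [Finset.sum_add_distrib, ← Finset.mul_sum, ← Finset.mul_sum]
    have hR : (∑ i, (actionProb ξ χ i * Vd (Matrix.vecMul (posterior ξ χ i) M)
        + actionProb ξ χ i * D))
        = (∑ i, actionProb ξ χ i * Vd (Matrix.vecMul (posterior ξ χ i) M)) + D := by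
      rw [Finset.sum_add_distrib, ← Finset.sum_mul, sum_actionProb hξΔ hchiv, one_mul]
    have hsum2 : t * ∑ i, actionProb p χ1 i * Vd (Matrix.vecMul (posterior p χ1 i) M)
        + (1-t) * ∑ i, actionProb q χ2 i * Vd (Matrix.vecMul (posterior q χ2 i) M)
        ≤ (∑ i, actionProb ξ χ i * Vd (Matrix.vecMul (posterior ξ χ i) M)) + D := by
      rw [← hL, ← hR]; exact Finset.sum_le_sum fun i _ => hterm i
    have m1 := mul_le_mul_of_nonneg_left hg1.le ht.1
    have m2 := mul_le_mul_of_nonneg_left hg2.le (by linarith : (0:ℝ) ≤ 1 - t)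
    have m3 := mul_le_mul_of_nonneg_left hr (by linarith : (0:ℝ) ≤ 1 - δ)
    have m4 := mul_le_mul_of_nonneg_left hsum2 hδ0
    nlinarith [m1, m2, m3, m4, hbell, hx]
  have hD_le : D ≤ 0 := by
    by_contra hpos
    push_neg at hpos
    have h3 := hkeyD ((1-δ) * D / 4)
      (div_pos (mul_pos (by linarith) hpos) (by norm_num))
    nlinarith [h3]
  intro t ht p hp q hq
  have := hD_elem t p q ht hp hq
  linarith
end

section
variable {K I J : Type*} [Fintype K] [Fintype I] [Fintype J] [Nonempty J] [Nonempty I] [Nonempty K]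

lemma weighted_mono {M : Matrix K K ℝ} (hM : IsStochastic M) {ξ : K → ℝ} {χ : K → I → ℝ}
    (hξ : ξ ∈ stdSimplex ℝ K) (hχ : ∀ ℓ, χ ℓ ∈ stdSimplex ℝ I)
    {W1 W2 : (K → ℝ) → ℝ} (h : ∀ ζ ∈ stdSimplex ℝ K, W1 ζ ≤ W2 ζ) :
    ∑ i, actionProb ξ χ i * W1 (Matrix.vecMul (posterior ξ χ i) M)
      ≤ ∑ i, actionProb ξ χ i * W2 (Matrix.vecMul (posterior ξ χ i) M) := by
  refine Finset.sum_le_sum fun i _ => ?_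
  rcases lt_or_eq_of_le (actionProb_nonneg hξ.1 (fun ℓ i => (hχ ℓ).1 i) i) with hpos | hz
  · exact mul_le_mul_of_nonneg_left
      (h _ (vecMul_mem hM (posterior_mem hξ.1 (fun ℓ i => (hχ ℓ).1 i) hpos))) hpos.le
  · rw [← hz]; simp

end

noncomputable def Psi {K I J : Type*} [Fintype K] [Fintype I] [Fintype J] [Nonempty J]
    (M : Matrix K K ℝ) (G : K → I → J → ℝ) : ℕ → (K → ℝ) → ℝ
  | 0 => fun _ => 0
  | n+1 => fun ξ => sSup (gSet M G 1 1 (Psi M G n) ξ)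

section
variable {K I J : Type*} [Fintype K] [Fintype I] [Fintype J] [Nonempty J] [Nonempty I] [Nonempty K]
variable {M : Matrix K K ℝ} {G : K → I → J → ℝ} {C δ : ℝ} {Vd : (K → ℝ) → ℝ}

lemma Psi_succ (n : ℕ) (ξ : K → ℝ) :
    Psi M G (n+1) ξ = sSup (gSet M G 1 1 (Psi M G n) ξ) := rfl

lemma Psi_zero (ξ : K → ℝ) : Psi M G 0 ξ = 0 := rfl

lemma psi_bounds (hM : IsStochastic M) (hG : ∀ ℓ i j, 0 ≤ G ℓ i j)
    (hGC : ∀ ℓ i j, G ℓ i j ≤ C) (hC0 : 0 ≤ C) :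
    ∀ n : ℕ, ∀ ξ ∈ stdSimplex ℝ K, 0 ≤ Psi M G n ξ ∧ Psi M G n ξ ≤ n * C := by
  intro n
  induction n with
  | zero => intro ξ hξ; rw [Psi_zero]; exact ⟨le_refl 0, by simp⟩
  | succ n ih =>
    intro ξ hξ
    constructor
    · rw [Psi_succ]
      have h1 : 0 ≤ gVal M G 1 1 (Psi M G n) ξ (uchi K I) :=
        gVal_nonneg hM hG zero_le_one zero_le_one (fun ζ hζ => (ih ζ hζ).1) hξ uchi_mem
      have h2 := le_csSup (gSet_bddAbove hM hGC zero_le_one zero_le_one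
        (fun ζ hζ => (ih ζ hζ).2) hξ) (⟨uchi K I, uchi_mem, rfl⟩ :
          gVal M G 1 1 (Psi M G n) ξ (uchi K I) ∈ gSet M G 1 1 (Psi M G n) ξ)
      linarith
    · rw [Psi_succ]
      refine csSup_le (gSet_nonempty M G _ _ _ ξ) ?_
      rintro y ⟨χ, hχ, rfl⟩
      have h3 := gVal_le hM hGC zero_le_one zero_le_one (fun ζ hζ => (ih ζ hζ).2) hξ hχ
      calc gVal M G 1 1 (Psi M G n) ξ χ ≤ 1 * C + 1 * (n * C) := h3
        _ = (n+1 : ℕ) * C := by push_cast; ring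

lemma psi_upper (hM : IsStochastic M) (hG : ∀ ℓ i j, 0 ≤ G ℓ i j)
    (hGC : ∀ ℓ i j, G ℓ i j ≤ C) (hδ0 : 0 ≤ δ) (hδ1 : δ < 1)
    (hV0 : ∀ ζ ∈ stdSimplex ℝ K, 0 ≤ Vd ζ) (hVC : ∀ ζ ∈ stdSimplex ℝ K, Vd ζ ≤ C)
    (hBell : ∀ ζ ∈ stdSimplex ℝ K, Vd ζ = sSup (gSet M G (1-δ) δ Vd ζ))
    {B : ℝ} (hB : ∀ ζ ∈ stdSimplex ℝ K, Vd ζ ≤ B) :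
    ∀ n : ℕ, ∀ ξ ∈ stdSimplex ℝ K, Psi M G n ξ ≤ Vd ξ / (1-δ) + n * B := by
  have h1x : (0:ℝ) < 1 - δ := by linarith
  intro n
  induction n with
  | zero =>
    intro ξ hξ
    have h2 : 0 ≤ Vd ξ / (1-δ) := div_nonneg (hV0 ξ hξ) h1x.le
    rw [Psi_zero]; push_cast; linarith
  | succ n ih =>
    intro ξ hξ
    rw [Psi_succ]
    refine csSup_le (gSet_nonempty M G _ _ _ ξ) ?_
    rintro y ⟨χ, hχ, rfl⟩
    simp only [gVal, one_mul]
    have w1 : (∑ i, actionProb ξ χ i * Psi M G n (Matrix.vecMul (posterior ξ χ i) M))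
        ≤ ∑ i, actionProb ξ χ i *
          (Vd (Matrix.vecMul (posterior ξ χ i) M) / (1-δ) + n * B) :=
      weighted_mono hM hξ hχ (fun ζ hζ => ih ζ hζ)
    have w2 : (∑ i, actionProb ξ χ i *
          (Vd (Matrix.vecMul (posterior ξ χ i) M) / (1-δ) + n * B))
        = (∑ i, actionProb ξ χ i * Vd (Matrix.vecMul (posterior ξ χ i) M)) / (1-δ)
          + n * B := by
      calc (∑ i, actionProb ξ χ i *
            (Vd (Matrix.vecMul (posterior ξ χ i) M) / (1-δ) + n * B))
          = ∑ i, (actionProb ξ χ i * Vd (Matrix.vecMul (posterior ξ χ i) M) / (1-δ)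
            + actionProb ξ χ i * ((n:ℝ) * B)) :=
            Finset.sum_congr rfl fun i _ => by ring
        _ = (∑ i, actionProb ξ χ i * Vd (Matrix.vecMul (posterior ξ χ i) M)) / (1-δ)
            + (∑ i, actionProb ξ χ i) * ((n:ℝ) * B) := by
            rw [Finset.sum_add_distrib, ← Finset.sum_div, ← Finset.sum_mul]
        _ = _ := by rw [sum_actionProb hξ hχ, one_mul]
    have hbell := le_V hM hGC hδ0 hδ1.le hVC hBell hξ hχ
    simp only [gVal] at hbell
    have hS : (∑ i, actionProb ξ χ i * Vd (Matrix.vecMul (posterior ξ χ i) M)) ≤ B :=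
      weighted_le hM hξ hχ hB
    have hfin : onestagePayoff G ξ χ
        + (∑ i, actionProb ξ χ i * Vd (Matrix.vecMul (posterior ξ χ i) M)) / (1-δ)
        ≤ Vd ξ / (1-δ) + B := by
      rw [← sub_nonneg]
      have e : Vd ξ / (1-δ) + B - (onestagePayoff G ξ χ
          + (∑ i, actionProb ξ χ i * Vd (Matrix.vecMul (posterior ξ χ i) M)) / (1-δ))
          = ((Vd ξ - ((1-δ) * onestagePayoff G ξ χ
            + δ * ∑ i, actionProb ξ χ i * Vd (Matrix.vecMul (posterior ξ χ i) M)))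
            + (1-δ) * (B - ∑ i, actionProb ξ χ i
                * Vd (Matrix.vecMul (posterior ξ χ i) M))) / (1-δ) := by
        field_simp
        ring
      rw [e]
      have hnum2 : 0 ≤ (1-δ) * (B - ∑ i, actionProb ξ χ i
          * Vd (Matrix.vecMul (posterior ξ χ i) M)) :=
        mul_nonneg h1x.le (by linarith [hS])
      exact div_nonneg (by linarith [hbell]) h1x.le
    push_cast
    linarith [w1, w2.le, w2.ge, hfin]

lemma psi_lower (hM : IsStochastic M) (hG : ∀ ℓ i j, 0 ≤ G ℓ i j)
    (hGC : ∀ ℓ i j, G ℓ i j ≤ C) (hC0 : 0 ≤ C) (hδ0 : 0 ≤ δ) (hδ1 : δ < 1)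
    (hV0 : ∀ ζ ∈ stdSimplex ℝ K, 0 ≤ Vd ζ) (hVC : ∀ ζ ∈ stdSimplex ℝ K, Vd ζ ≤ C)
    (hBell : ∀ ζ ∈ stdSimplex ℝ K, Vd ζ = sSup (gSet M G (1-δ) δ Vd ζ))
    {b : ℝ} (hb : ∀ ζ ∈ stdSimplex ℝ K, b ≤ Vd ζ) :
    ∀ n : ℕ, ∀ ξ ∈ stdSimplex ℝ K,
      Vd ξ / (1-δ) - C / (1-δ) + n * b ≤ Psi M G n ξ := by
  have h1x : (0:ℝ) < 1 - δ := by linarith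
  intro n
  induction n with
  | zero =>
    intro ξ hξ
    have h2 : Vd ξ / (1-δ) ≤ C / (1-δ) := by
      exact (div_le_div_iff_of_pos_right h1x).mpr (hVC ξ hξ)
    rw [Psi_zero]; push_cast; linarith
  | succ n ih =>
    intro ξ hξ
    refine le_of_forall_pos_le_add ?_
    intro ε hε
    obtain ⟨χ, hχ, hgv⟩ := exists_chi hBell hξ (mul_pos hε h1x)
    have hle : gVal M G 1 1 (Psi M G n) ξ χ ≤ Psi M G (n+1) ξ := by
      rw [Psi_succ]
      exact le_csSup (gSet_bddAbove hM hGC zero_le_one zero_le_one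
        (fun ζ hζ => (psi_bounds hM hG hGC hC0 n ζ hζ).2) hξ) ⟨χ, hχ, rfl⟩
    simp only [gVal, one_mul] at hle
    simp only [gVal] at hgv
    have w1 : (∑ i, actionProb ξ χ i *
          (Vd (Matrix.vecMul (posterior ξ χ i) M) / (1-δ) - C / (1-δ) + n * b))
        ≤ ∑ i, actionProb ξ χ i * Psi M G n (Matrix.vecMul (posterior ξ χ i) M) :=
      weighted_mono hM hξ hχ (fun ζ hζ => ih ζ hζ)
    have w2 : (∑ i, actionProb ξ χ i *
          (Vd (Matrix.vecMul (posterior ξ χ i) M) / (1-δ) - C / (1-δ) + n * b))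
        = (∑ i, actionProb ξ χ i * Vd (Matrix.vecMul (posterior ξ χ i) M)) / (1-δ)
          - C / (1-δ) + n * b := by
      calc (∑ i, actionProb ξ χ i *
            (Vd (Matrix.vecMul (posterior ξ χ i) M) / (1-δ) - C / (1-δ) + n * b))
          = ∑ i, (actionProb ξ χ i * Vd (Matrix.vecMul (posterior ξ χ i) M) / (1-δ)
            + actionProb ξ χ i * ((n:ℝ) * b - C / (1-δ))) :=
            Finset.sum_congr rfl fun i _ => by ring
        _ = (∑ i, actionProb ξ χ i * Vd (Matrix.vecMul (posterior ξ χ i) M)) / (1-δ)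
            + (∑ i, actionProb ξ χ i) * ((n:ℝ) * b - C / (1-δ)) := by
            rw [Finset.sum_add_distrib, ← Finset.sum_div, ← Finset.sum_mul]
        _ = _ := by rw [sum_actionProb hξ hχ, one_mul]; ring
    have hSb : b ≤ ∑ i, actionProb ξ χ i * Vd (Matrix.vecMul (posterior ξ χ i) M) :=
      weighted_ge hM hξ hχ hb
    have hdiv : (Vd ξ - ε * (1-δ)) / (1-δ) ≤ ((1-δ) * onestagePayoff G ξ χ
        + δ * ∑ i, actionProb ξ χ i * Vd (Matrix.vecMul (posterior ξ χ i) M)) / (1-δ) :=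
      (div_le_div_iff_of_pos_right h1x).mpr hgv.le
    have e1 : (Vd ξ - ε * (1-δ)) / (1-δ) = Vd ξ / (1-δ) - ε := by
      field_simp
    have e2 : ((1-δ) * onestagePayoff G ξ χ
        + δ * ∑ i, actionProb ξ χ i * Vd (Matrix.vecMul (posterior ξ χ i) M)) / (1-δ)
        = onestagePayoff G ξ χ
          + δ * ((∑ i, actionProb ξ χ i * Vd (Matrix.vecMul (posterior ξ χ i) M)) / (1-δ)) := by
      field_simp
    have e3 : (∑ i, actionProb ξ χ i * Vd (Matrix.vecMul (posterior ξ χ i) M)) / (1-δ)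
        * (1-δ) = ∑ i, actionProb ξ χ i * Vd (Matrix.vecMul (posterior ξ χ i) M) :=
      div_mul_cancel₀ _ h1x.ne'
    push_cast
    linarith [hle, w1, w2.le, w2.ge, hSb, hdiv, e1.le, e1.ge, e2.le, e2.ge, e3.le, e3.ge]

end

lemma harch {a b : ℝ} (h : ∀ n : ℕ, (n:ℝ) * a ≤ b) : a ≤ 0 := by
  by_contra hpos
  push_neg at hpos
  obtain ⟨n, hn⟩ := exists_nat_gt (b / a)
  have h2 := h n
  rw [div_lt_iff₀ hpos] at hn
  linarith

section
variable {K : Type*} [Fintype K] [Nonempty K] {C : ℝ} {Vd : (K → ℝ) → ℝ}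

lemma lip_at_pi (hC0 : 0 ≤ C)
    (hV0 : ∀ ζ ∈ stdSimplex ℝ K, 0 ≤ Vd ζ) (hVC : ∀ ζ ∈ stdSimplex ℝ K, Vd ζ ≤ C)
    (conc : ∀ t ∈ Set.Icc (0:ℝ) 1, ∀ p ∈ stdSimplex ℝ K, ∀ q ∈ stdSimplex ℝ K,
      t * Vd p + (1-t) * Vd q ≤ Vd (fun ℓ => t * p ℓ + (1-t) * q ℓ))
    {π : K → ℝ} (hπ : π ∈ stdSimplex ℝ K) {c : ℝ} (hcpos : 0 < c)
    (hcle : ∀ ℓ, c ≤ π ℓ) :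
    ∀ ζ ∈ stdSimplex ℝ K, Vd π - (C / c) * dist1 ζ π ≤ Vd ζ := by
  intro ζ hζ
  have hd0 : 0 ≤ dist1 ζ π := Finset.sum_nonneg fun ℓ _ => abs_nonneg _
  have habs : ∀ ℓ, |ζ ℓ - π ℓ| ≤ dist1 ζ π :=
    fun ℓ => Finset.single_le_sum (f := fun ℓ => |ζ ℓ - π ℓ|)
      (fun ℓ _ => abs_nonneg _) (Finset.mem_univ ℓ)
  set d := dist1 ζ π with hd
  clear_value d
  by_cases hzero : d = 0
  · have hζπ : ζ = π := by
      funext ℓ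
      have h2 : |ζ ℓ - π ℓ| = 0 :=
        le_antisymm (hzero ▸ habs ℓ) (abs_nonneg _)
      have h3 := abs_eq_zero.mp h2
      linarith
    rw [hζπ, hzero, mul_zero, sub_zero]
  by_cases hbig : c ≤ d
  · have h1 : C ≤ (C / c) * d := by
      rw [div_mul_eq_mul_div, le_div_iff₀ hcpos]
      exact mul_le_mul_of_nonneg_left hbig hC0
    have h2 := hV0 ζ hζ
    have h3 := hVC π hπ
    linarith
  push_neg at hbig
  have hdpos : 0 < d := lt_of_le_of_ne hd0 (Ne.symm hzero)
  set t := 1 - d / c with htdef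
  clear_value t
  have hdc1 : d / c < 1 := (div_lt_one hcpos).mpr hbig
  have hdc0 : 0 < d / c := div_pos hdpos hcpos
  have h1t : 1 - t = d / c := by rw [htdef]; ring
  have hne : (1:ℝ) - t ≠ 0 := by rw [h1t]; exact hdc0.ne'
  have hηΔ : (fun ℓ => (ζ ℓ - t * π ℓ) / (1 - t)) ∈ stdSimplex ℝ K := by
    constructor
    · intro ℓ
      refine div_nonneg ?_ (by rw [h1t]; exact hdc0.le)
      have h2 : ζ ℓ - t * π ℓ = (ζ ℓ - π ℓ) + (d/c) * π ℓ := by rw [htdef]; ring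
      rw [h2]
      have h3 : d ≤ (d/c) * π ℓ := by
        calc d = (d/c) * c := by field_simp
          _ ≤ (d/c) * π ℓ := mul_le_mul_of_nonneg_left (hcle ℓ) hdc0.le
      have h4 : -d ≤ ζ ℓ - π ℓ := by
        have h5 := habs ℓ; rw [abs_le] at h5; linarith [h5.1]
      linarith
    · show (∑ ℓ, (ζ ℓ - t * π ℓ) / (1 - t)) = 1
      rw [← Finset.sum_div, div_eq_one_iff_eq hne]
      rw [Finset.sum_sub_distrib, hζ.2, ← Finset.mul_sum, hπ.2, mul_one]
  have hcomb : (fun ℓ => t * π ℓ + (1-t) * ((ζ ℓ - t * π ℓ) / (1 - t))) = ζ := by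
    funext ℓ
    field_simp
    ring
  have hc1 := conc t ⟨by rw [htdef]; linarith, by rw [htdef]; linarith⟩ π hπ _ hηΔ
  rw [hcomb] at hc1
  have h5 : 0 ≤ Vd (fun ℓ => (ζ ℓ - t * π ℓ) / (1 - t)) := hV0 _ hηΔ
  have h6 : Vd π ≤ C := hVC π hπ
  have h7 : (1-t) * Vd π ≤ (1-t) * C :=
    mul_le_mul_of_nonneg_left h6 (by rw [h1t]; exact hdc0.le)
  have h8 : (C / c) * d = (1-t) * C := by rw [h1t]; field_simp
  have h9 : 0 ≤ (1-t) * Vd (fun ℓ => (ζ ℓ - t * π ℓ) / (1 - t)) :=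
    mul_nonneg (by rw [h1t]; exact hdc0.le) h5
  linarith [hc1, h7, h8, h9]
end

end MCG

set_option maxHeartbeats 2000000 in
open MCG in
theorem markov_chain_game_rate_of_convergence
    {K I J : Type*} [Fintype K] [Nonempty K] [DecidableEq K]
    [Fintype I] [Nonempty I] [Fintype J] [Nonempty J]
    (M : Matrix K K ℝ) (hM : IsStochastic M)
    (herg : ∃ N : ℕ, 1 ≤ N ∧ ∀ i j, 0 < (M ^ N) i j)
    (G : K → I → J → ℝ) (hG : ∀ ℓ i j, 0 ≤ G ℓ i j)
    (C : ℝ) (hC : IsGreatest { x : ℝ | ∃ ℓ i j, x = G ℓ i j } C)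
    (V : ℝ → (K → ℝ) → ℝ) (hV : IsGameValueFamily M G C V)
    (πM : K → ℝ) (hπ : πM ∈ stdSimplex ℝ K) (hπinv : Matrix.vecMul πM M = πM)
    (hπuniq : ∀ π' ∈ stdSimplex ℝ K, Matrix.vecMul π' M = π' → π' = πM)
    (hπpos : ∀ ℓ, 0 < πM ℓ)
    (cstar : ℝ) (hcstar : IsLeast (Set.range πM) cstar) :
    ∃ Vinf Cconst : ℝ, 0 ≤ Vinf ∧ 0 < Cconst ∧
      ∀ δ : ℝ, 1 - cstar / 2 < δ → δ < 1 →
        ∀ ξ ∈ stdSimplex ℝ K,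
          |V δ ξ - Vinf| ≤ Cconst * ((1 - δ) * Real.logb 2 (1 / (1 - δ))) := by
  classical
  obtain ⟨⟨ℓ0, i0, j0, hCeq⟩, hCub⟩ := hC
  have hGC : ∀ ℓ i j, G ℓ i j ≤ C := fun ℓ i j => hCub ⟨ℓ, i, j, rfl⟩
  have hC0 : 0 ≤ C := hCeq ▸ hG ℓ0 i0 j0
  obtain ⟨N, hN1, hNpos⟩ := herg
  have hPstoch : IsStochastic (M ^ N) := stoch_pow hM N
  obtain ⟨mn, hmn⟩ := Finite.exists_min (fun p : K × K => (M ^ N) p.1 p.2)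
  have hepos : 0 < (M ^ N) mn.1 mn.2 := hNpos mn.1 mn.2
  have hPe : ∀ i j, (M ^ N) mn.1 mn.2 ≤ (M ^ N) i j := fun i j => hmn (i, j)
  set e := (M ^ N) mn.1 mn.2 with hedef
  clear_value e
  set κ := (Fintype.card K : ℝ) * e with hκdef
  have hcardpos : (0:ℝ) < Fintype.card K := by exact_mod_cast Fintype.card_pos
  have hκpos : 0 < κ := mul_pos hcardpos hepos
  have hκ1 : κ ≤ 1 := by
    have h1 : (∑ _j : K, e) ≤ ∑ j, (M ^ N) mn.1 j := Finset.sum_le_sum fun j _ => hPe mn.1 j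
    rw [Finset.sum_const, Finset.card_univ, nsmul_eq_mul, hPstoch.2 mn.1] at h1
    rw [hκdef]; exact h1
  clear_value κ
  have hπpow : ∀ n : ℕ, Matrix.vecMul πM (M ^ n) = πM := by
    intro n; induction n with
    | zero => simp [Matrix.vecMul_one]
    | succ n ih => rw [pow_succ, ← Matrix.vecMul_vecMul, ih, hπinv]
  obtain ⟨ℓs, hℓs⟩ := hcstar.1
  have hcpos : 0 < cstar := hℓs ▸ hπpos ℓs
  have hcle : ∀ ℓ, cstar ≤ πM ℓ := fun ℓ => hcstar.2 ⟨ℓ, rfl⟩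
  have hc1 : cstar ≤ 1 := by
    have h2 := Finset.single_le_sum (f := πM) (fun ℓ _ => (hπpos ℓ).le) (Finset.mem_univ ℓs)
    rw [hπ.2, hℓs] at h2; exact h2
  have hle1 : ∀ ξ : K → ℝ, ξ ∈ stdSimplex ℝ K → ∀ ℓ, ξ ℓ ≤ 1 := by
    intro ξ hξ ℓ
    have h2 := Finset.single_le_sum (f := ξ) (fun ℓ _ => hξ.1 ℓ) (Finset.mem_univ ℓ)
    rw [hξ.2] at h2; exact h2
  set A1 : ℝ := (N:ℝ) * C * (1 + 1/κ) + 2 * C / cstar with hA1def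
  have hA10 : 0 ≤ A1 := by
    rw [hA1def]
    have h3 : 0 ≤ 1/κ := by positivity
    have h4 : 0 ≤ (N:ℝ) * C * (1 + 1/κ) :=
      mul_nonneg (mul_nonneg (Nat.cast_nonneg N) hC0) (by linarith)
    have h5 : 0 ≤ 2 * C / cstar := div_nonneg (by linarith) hcpos.le
    linarith
  clear_value A1
  set A : ℝ := 1 + A1 + A1 / cstar with hAdef
  have hA1A : A1 ≤ A := by
    rw [hAdef]; have := div_nonneg hA10 hcpos.le; linarith
  have hA1cA : A1 / cstar ≤ A := by
    rw [hAdef]; linarith [hA10]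
  have hApos : 0 < A := by
    rw [hAdef]; have := div_nonneg hA10 hcpos.le; linarith
  clear_value A
  have hfnn : ∀ δ : ℝ, 1 - cstar/2 < δ → δ < 1 →
      0 ≤ (1-δ) * Real.logb 2 (1/(1-δ)) := by
    intro δ h1 h2
    have hx0 : (0:ℝ) < 1 - δ := by linarith
    exact mul_nonneg hx0.le (Real.logb_nonneg one_lt_two
      (by rw [le_div_iff₀ hx0]; linarith))
  -- near-constancy of V δ on the simplex
  have hnear : ∀ δ : ℝ, 1 - cstar / 2 < δ → δ < 1 →
      (∀ ξ ∈ stdSimplex ℝ K,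
        V δ πM - A1 * ((1-δ) * Real.logb 2 (1/(1-δ))) ≤ V δ ξ) ∧
      (∀ ξ ∈ stdSimplex ℝ K,
        V δ ξ ≤ V δ πM + (A1/cstar) * ((1-δ) * Real.logb 2 (1/(1-δ)))) := by
    intro δ hδa hδb
    have hδ0 : 0 ≤ δ := by linarith
    have hx0 : (0:ℝ) < 1 - δ := by linarith
    have hxhalf : 1 - δ < 1/2 := by linarith
    obtain ⟨hbnds, hbell0⟩ := hV δ ⟨hδ0, hδb⟩
    have hV0 : ∀ ξ ∈ stdSimplex ℝ K, 0 ≤ V δ ξ := fun ξ h => (hbnds ξ h).1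
    have hVC : ∀ ξ ∈ stdSimplex ℝ K, V δ ξ ≤ C := fun ξ h => (hbnds ξ h).2
    have hBell : ∀ ξ ∈ stdSimplex ℝ K, V δ ξ = sSup (gSet M G (1-δ) δ (V δ) ξ) := hbell0
    have conc := V_concave hM hG hGC hδ0 hδb hV0 hVC hBell
    have hlip := lip_at_pi hC0 hV0 hVC conc hπ hcpos hcle
    have hinv2 : (2:ℝ) ≤ 1/(1-δ) := by rw [le_div_iff₀ hx0]; linarith
    have hlog2pos : (0:ℝ) < Real.log 2 := Real.log_pos one_lt_two
    have hlogb1 : 1 ≤ Real.logb 2 (1/(1-δ)) := by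
      rw [Real.logb, le_div_iff₀ hlog2pos, one_mul]
      exact Real.log_le_log two_pos hinv2
    have hlogb0 : 0 ≤ Real.logb 2 (1/(1-δ)) := by linarith
    have hf0 : 0 ≤ (1-δ) * Real.logb 2 (1/(1-δ)) := mul_nonneg hx0.le hlogb0
    have hxlef : 1 - δ ≤ (1-δ) * Real.logb 2 (1/(1-δ)) := by nlinarith [hlogb1, hx0.le]
    set k := ⌈Real.logb 2 (1/(1-δ)) / κ⌉₊ with hkdef
    have hk1 : Real.logb 2 (1/(1-δ)) / κ ≤ (k:ℝ) := Nat.le_ceil _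
    have hkup : (k:ℝ) ≤ (1 + 1/κ) * Real.logb 2 (1/(1-δ)) := by
      have h2 : (k:ℝ) < Real.logb 2 (1/(1-δ)) / κ + 1 :=
        Nat.ceil_lt_add_one (div_nonneg hlogb0 hκpos.le)
      have h3 : Real.logb 2 (1/(1-δ)) / κ = (1/κ) * Real.logb 2 (1/(1-δ)) := by ring
      rw [h3] at h2
      nlinarith [hlogb1]
    have hcontr : (1-κ)^k ≤ 1 - δ := by
      have hb1 : (0:ℝ) ≤ 1 - κ := by linarith
      have hb2 : 1 - κ ≤ Real.exp (-κ) := by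
        have := Real.add_one_le_exp (-κ); linarith
      have hb3 : (1-κ)^k ≤ (Real.exp (-κ))^k := pow_le_pow_left₀ hb1 hb2 k
      have hb4 : (Real.exp (-κ))^k = Real.exp (-(κ * k)) := by
        rw [← Real.exp_nat_mul]; congr 1; ring
      have hb5 : Real.exp (-(κ * k)) ≤ 1 - δ := by
        rw [← Real.exp_log hx0, Real.exp_le_exp]
        have hlogx : Real.log (1-δ) = - Real.log (1/(1-δ)) := by
          rw [one_div, Real.log_inv]; ring
        rw [hlogx, neg_le_neg_iff]
        have h6 : Real.log (1/(1-δ)) ≤ Real.logb 2 (1/(1-δ)) := by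
          have hlog19 : Real.log 2 < 1 := by
            have := Real.log_two_lt_d9; linarith
          have hlpos : 0 ≤ Real.log (1/(1-δ)) := Real.log_nonneg (by linarith)
          rw [Real.logb, le_div_iff₀ hlog2pos]
          nlinarith
        have h7 : Real.logb 2 (1/(1-δ)) ≤ κ * k := by
          rw [div_le_iff₀ hκpos] at hk1; linarith
        linarith
      calc (1-κ)^k ≤ (Real.exp (-κ))^k := hb3
        _ = Real.exp (-(κ * k)) := hb4
        _ ≤ 1 - δ := hb5
    have hlow : ∀ ξ ∈ stdSimplex ℝ K,
        V δ πM - A1 * ((1-δ) * Real.logb 2 (1/(1-δ))) ≤ V δ ξ := by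
      intro ξ hξ
      have hnp := nonrev_pow hM hG hGC hδ0 hδb.le hVC hBell (N*k) hξ
      have hζΔ : Matrix.vecMul ξ (M ^ (N*k)) ∈ stdSimplex ℝ K :=
        vecMul_mem (stoch_pow hM _) hξ
      have hmix : dist1 (Matrix.vecMul ξ (M ^ (N*k))) πM ≤ (1-κ)^k * 2 := by
        have hκ1' : (Fintype.card K : ℝ) * e ≤ 1 := by rw [← hκdef]; exact hκ1
        have h2 := mix hPstoch (hπpow N) hπ hepos.le hPe hκ1' k ξ hξ
        rw [← pow_mul] at h2
        rw [← hκdef] at h2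
        exact h2
      have h5 := hlip (Matrix.vecMul ξ (M ^ (N*k))) hζΔ
      have h6 : (C/cstar) * dist1 (Matrix.vecMul ξ (M ^ (N*k))) πM
          ≤ (C/cstar) * ((1-κ)^k * 2) :=
        mul_le_mul_of_nonneg_left hmix (div_nonneg hC0 hcpos.le)
      have hVζC := hVC _ hζΔ
      have hVζ0 := hV0 _ hζΔ
      have hpow0 : (0:ℝ) ≤ δ^(N*k) := pow_nonneg hδ0 _
      have hpow1 : δ^(N*k) ≤ 1 := pow_le_one₀ hδ0 hδb.le
      have hbern : 1 - ((N*k : ℕ):ℝ) * (1-δ) ≤ δ^(N*k) := by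
        have h9 := one_add_mul_le_pow (a := -(1-δ)) (by linarith) (N*k)
        have he : ((1:ℝ) + -(1-δ)) = δ := by ring
        rw [he] at h9
        linarith
      have h8 : V δ (Matrix.vecMul ξ (M ^ (N*k))) - (1 - δ^(N*k)) * C
          ≤ δ^(N*k) * V δ (Matrix.vecMul ξ (M ^ (N*k))) := by
        nlinarith [hVζC, hpow1, hpow0, hVζ0]
      have hb1 : (C/cstar) * ((1-κ)^k * 2)
          ≤ 2*C/cstar * ((1-δ) * Real.logb 2 (1/(1-δ))) := by
        have h9 : (C/cstar) * ((1-κ)^k * 2) = (2*C/cstar) * (1-κ)^k := by ring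
        rw [h9]
        refine mul_le_mul_of_nonneg_left ?_ (div_nonneg (by linarith) hcpos.le)
        exact le_trans hcontr hxlef
      have hb2 : (1 - δ^(N*k)) * C
          ≤ (N:ℝ)*C*(1 + 1/κ) * ((1-δ) * Real.logb 2 (1/(1-δ))) := by
        have hc2 : (1 - δ^(N*k)) * C ≤ ((N*k : ℕ):ℝ) * (1-δ) * C := by
          have h9 : 1 - δ^(N*k) ≤ ((N*k : ℕ):ℝ) * (1-δ) := by linarith [hbern]
          exact mul_le_mul_of_nonneg_right h9 hC0
        have hcast : ((N*k : ℕ):ℝ) = (N:ℝ) * (k:ℝ) := by push_cast; ring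
        rw [hcast] at hc2
        have hprod : 0 ≤ (N:ℝ) * (1-δ) * C
            * ((1 + 1/κ) * Real.logb 2 (1/(1-δ)) - (k:ℝ)) :=
          mul_nonneg (mul_nonneg (mul_nonneg (Nat.cast_nonneg N) hx0.le) hC0)
            (by linarith [hkup])
        nlinarith [hc2, hprod]
      rw [hA1def]
      nlinarith [hnp, h8, h5, h6, hb1, hb2]
    refine ⟨hlow, ?_⟩
    intro ξ hξ
    by_cases hcl : cstar < 1
    · have h1c : (0:ℝ) < 1 - cstar := by linarith
      have hρΔ : (fun ℓ => (πM ℓ - cstar * ξ ℓ) / (1 - cstar)) ∈ stdSimplex ℝ K := by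
        constructor
        · intro ℓ
          refine div_nonneg ?_ h1c.le
          have h2 := hle1 ξ hξ ℓ
          have h3 := hcle ℓ
          nlinarith [hξ.1 ℓ, hcpos.le]
        · show (∑ ℓ, (πM ℓ - cstar * ξ ℓ) / (1 - cstar)) = 1
          rw [← Finset.sum_div, div_eq_one_iff_eq h1c.ne']
          rw [Finset.sum_sub_distrib, hπ.2, ← Finset.mul_sum, hξ.2, mul_one]
      have hcomb : (fun ℓ => cstar * ξ ℓ
          + (1 - cstar) * ((πM ℓ - cstar * ξ ℓ)/(1 - cstar))) = πM := by
        funext ℓ; field_simp; ring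
      have hc2 := conc cstar ⟨hcpos.le, hc1⟩ ξ hξ _ hρΔ
      rw [hcomb] at hc2
      have h3 := hlow _ hρΔ
      have h4 := mul_le_mul_of_nonneg_left h3 h1c.le
      have h5 : cstar * (V δ πM + (A1/cstar) * ((1-δ) * Real.logb 2 (1/(1-δ))))
          = cstar * V δ πM + A1 * ((1-δ) * Real.logb 2 (1/(1-δ))) := by
        field_simp
      have h6 : 0 ≤ A1 * ((1-δ) * Real.logb 2 (1/(1-δ))) := mul_nonneg hA10 hf0
      have h7 : cstar * V δ ξ
          ≤ cstar * (V δ πM + (A1/cstar) * ((1-δ) * Real.logb 2 (1/(1-δ)))) := by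
        rw [h5]
        nlinarith [hc2, h4, h6]
      exact le_of_mul_le_mul_left h7 hcpos
    · push_neg at hcl
      have hKsingle : ∀ ℓ' ℓ : K, ℓ' = ℓ := by
        intro ℓ' ℓ
        by_contra hne
        have h2 : πM ℓ' + πM ℓ ≤ ∑ l, πM l := by
          rw [show πM ℓ' + πM ℓ = ∑ l ∈ ({ℓ', ℓ} : Finset K), πM l by
            rw [Finset.sum_pair hne]]
          exact Finset.sum_le_sum_of_subset_of_nonneg (Finset.subset_univ _)
            (fun l _ _ => (hπpos l).le)
        rw [hπ.2] at h2
        have h3 := hcle ℓ'; have h4 := hcle ℓ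
        linarith
      have hξπ : ξ = πM := by
        funext ℓ
        have huniv : (Finset.univ : Finset K) = {ℓ} := by
          ext y; simp [hKsingle y ℓ]
        have h2 : ξ ℓ = 1 := by
          have h9 := hξ.2; rw [huniv, Finset.sum_singleton] at h9; exact h9
        have h3 : πM ℓ = 1 := by
          have h9 := hπ.2; rw [huniv, Finset.sum_singleton] at h9; exact h9
        rw [h2, h3]
      rw [hξπ]
      have h9 : 0 ≤ (A1/cstar) * ((1-δ) * Real.logb 2 (1/(1-δ))) :=
        mul_nonneg (div_nonneg hA10 hcpos.le) hf0
      linarith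
  -- pairwise comparison across discount factors
  have hpair : ∀ δ δ' : ℝ, 1 - cstar/2 < δ → δ < 1 → 1 - cstar/2 < δ' → δ' < 1 →
      V δ πM - A * ((1-δ) * Real.logb 2 (1/(1-δ)))
        ≤ V δ' πM + A * ((1-δ') * Real.logb 2 (1/(1-δ'))) := by
    intro δ δ' h1 h2 h1' h2'
    have hx0 : (0:ℝ) < 1 - δ := by linarith
    have hx0' : (0:ℝ) < 1 - δ' := by linarith
    obtain ⟨hbnds, hbell0⟩ := hV δ ⟨by linarith, h2⟩
    obtain ⟨hbnds', hbell0'⟩ := hV δ' ⟨by linarith, h2'⟩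
    obtain ⟨hlowδ, hupδ⟩ := hnear δ h1 h2
    obtain ⟨hlowδ', hupδ'⟩ := hnear δ' h1' h2'
    have hfd := hfnn δ h1 h2
    have hfd' := hfnn δ' h1' h2'
    have hPL := psi_lower hM hG hGC hC0 (by linarith : (0:ℝ) ≤ δ) h2
      (fun ξ h => (hbnds ξ h).1) (fun ξ h => (hbnds ξ h).2) hbell0 hlowδ
    have hPU := psi_upper hM hG hGC (by linarith : (0:ℝ) ≤ δ') h2'
      (fun ξ h => (hbnds' ξ h).1) (fun ξ h => (hbnds' ξ h).2) hbell0' hupδ'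
    have hkey : ∀ n : ℕ, (n:ℝ) * ((V δ πM - A1 * ((1-δ) * Real.logb 2 (1/(1-δ))))
        - (V δ' πM + (A1/cstar) * ((1-δ') * Real.logb 2 (1/(1-δ')))))
        ≤ C/(1-δ) + C/(1-δ') := by
      intro n
      have p1 := hPL n πM hπ
      have p2 := hPU n πM hπ
      have q1 : 0 ≤ V δ πM / (1-δ) := div_nonneg ((hbnds πM hπ).1) hx0.le
      have q2 : V δ' πM / (1-δ') ≤ C/(1-δ') :=
        (div_le_div_iff_of_pos_right hx0').mpr ((hbnds' πM hπ).2)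
      nlinarith [p1, p2, q1, q2]
    have h8 := harch hkey
    have hg1 : 0 ≤ (A - A1) * ((1-δ) * Real.logb 2 (1/(1-δ))) :=
      mul_nonneg (by linarith) hfd
    have hg2 : 0 ≤ (A - A1/cstar) * ((1-δ') * Real.logb 2 (1/(1-δ'))) :=
      mul_nonneg (by linarith) hfd'
    nlinarith [h8, hg1, hg2]
  -- the limit value
  have hSne : { y : ℝ | ∃ δ : ℝ, 1 - cstar/2 < δ ∧ δ < 1 ∧
      y = V δ πM + A * ((1-δ) * Real.logb 2 (1/(1-δ))) }.Nonempty :=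
    ⟨_, ⟨1 - cstar/4, by linarith, by linarith, rfl⟩⟩
  have hSlb : ∀ y ∈ { y : ℝ | ∃ δ : ℝ, 1 - cstar/2 < δ ∧ δ < 1 ∧
      y = V δ πM + A * ((1-δ) * Real.logb 2 (1/(1-δ))) }, 0 ≤ y := by
    rintro y ⟨δ, h1, h2, rfl⟩
    have h3 := ((hV δ ⟨by linarith, h2⟩).1 πM hπ).1
    have h4 := hfnn δ h1 h2
    nlinarith [mul_nonneg hApos.le h4]
  have hSbdd : BddBelow { y : ℝ | ∃ δ : ℝ, 1 - cstar/2 < δ ∧ δ < 1 ∧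
      y = V δ πM + A * ((1-δ) * Real.logb 2 (1/(1-δ))) } :=
    ⟨0, fun y hy => hSlb y hy⟩
  refine ⟨sInf { y : ℝ | ∃ δ : ℝ, 1 - cstar/2 < δ ∧ δ < 1 ∧
      y = V δ πM + A * ((1-δ) * Real.logb 2 (1/(1-δ))) }, 2*A,
    le_csInf hSne hSlb, by linarith, ?_⟩
  intro δ h1 h2 ξ hξ
  have hfd := hfnn δ h1 h2
  obtain ⟨hlowδ, hupδ⟩ := hnear δ h1 h2
  have hAf : sInf { y : ℝ | ∃ δ : ℝ, 1 - cstar/2 < δ ∧ δ < 1 ∧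
      y = V δ πM + A * ((1-δ) * Real.logb 2 (1/(1-δ))) }
      ≤ V δ πM + A * ((1-δ) * Real.logb 2 (1/(1-δ))) :=
    csInf_le hSbdd ⟨δ, h1, h2, rfl⟩
  have hAg : V δ πM - A * ((1-δ) * Real.logb 2 (1/(1-δ)))
      ≤ sInf { y : ℝ | ∃ δ : ℝ, 1 - cstar/2 < δ ∧ δ < 1 ∧
      y = V δ πM + A * ((1-δ) * Real.logb 2 (1/(1-δ))) } := by
    refine le_csInf hSne ?_
    rintro y ⟨δ', h1', h2', rfl⟩
    exact hpair δ δ' h1 h2 h1' h2'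
  rw [abs_le]
  have hg1 : 0 ≤ (A - A1) * ((1-δ) * Real.logb 2 (1/(1-δ))) :=
    mul_nonneg (by linarith) hfd
  have hg2 : 0 ≤ (A - A1/cstar) * ((1-δ) * Real.logb 2 (1/(1-δ))) :=
    mul_nonneg (by linarith) hfd
  constructor
  · have h3 := hlowδ ξ hξ
    nlinarith [hAf, h3, hg1]
  · have h3 := hupδ ξ hξ
    nlinarith [hAg, h3, hg2]
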